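/- If a word u has periods p and q, and |u| ≥ p + q − gcd(p,q), then u has period gcd(p,q). -/
import Mathlib


/-- `w` has period `p`: `w[i] = w[i+p]` whenever both positions exist. -/
def HasPeriod {α : Type*} (w : List α) (p : ℕ) : Prop :=
  ∀ i, (h : i + p < w.length) → w.get ⟨i, by omega⟩ = w.get ⟨i + p, h⟩

/-- A finite word is cube-free if it has no nonempty factor of the form `x ++ x ++ x`. -/
def Cubefree {α : Type*} (w : List α) : Prop :=
  ∀ x : List α, x ≠ [] → ¬ (x ++ x ++ x) <:+: w

/-- `x` is a factor of the infinite word `w`. -/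
def FactorOfInf {α : Type*} (x : List α) (w : ℕ → α) : Prop :=
  ∃ i, x = (List.range x.length).map fun k => w (i + k)

/-- An infinite word is cube-free if all its finite factors are cube free. -/
def CubefreeInf {α : Type*} (w : ℕ → α) : Prop :=
  ∀ x : List α, x ≠ [] → ¬ FactorOfInf (x ++ x ++ x) w

/-- Concatenation of a finite word and an infinite word. -/
def catInf {α : Type*} (u : List α) (w : ℕ → α) : ℕ → α :=
  fun k => if h : k < u.length then u.get ⟨k, h⟩ else w (k - u.length)

/-- The Thue–Morse morphism over `Bool` (`false` = a, `true` = b): `c ↦ c (¬c)`. -/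
def theta (w : List Bool) : List Bool := w.flatMap fun c => [c, !c]

/-- The Thue–Morse word over `Bool` (`false` = a, `true` = b), 0-indexed. -/
def tm : ℕ → Bool := fun n => (Nat.digits 2 n).sum % 2 == 1

/-- A binary word is uniform if it is `c ++ θ(u) ++ d` with `c, d` empty or a single letter. -/
def Uniform (w : List Bool) : Prop :=
  ∃ c u d : List Bool, c.length ≤ 1 ∧ d.length ≤ 1 ∧ w = c ++ theta u ++ d

/-- A binary word is right aligned if it is `c ++ θ(u)` with `c` empty or a single letter. -/
def RightAligned (w : List Bool) : Prop :=
  ∃ c u : List Bool, c.length ≤ 1 ∧ w = c ++ theta u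

/-- The four markers aabaa, ababa, babab, bbabb. -/
def markers : List (List Bool) :=
  [[false,false,true,false,false], [false,true,false,true,false],
   [true,false,true,false,true], [true,true,false,true,true]]

/-- The finite word `x` occurs in the infinite word `w` at position `i`. -/
def MatchesAt {α : Type*} (x : List α) (w : ℕ → α) (i : ℕ) : Prop :=
  ∀ k, (h : k < x.length) → x.get ⟨k, h⟩ = w (i + k)

/-- `u` is T-extendable: for some finite `w` and some position `n`,
`u ++ w ++ T[n..∞)` is cube free. -/
def TExtendable (u : List Bool) : Prop :=
  ∃ (w : List Bool) (n : ℕ), CubefreeInf (catInf (u ++ w) fun k => tm (n + k))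

/-- `u` is right extendable: some infinite extension of `u` is cube free. -/
def RightExtendable {α : Type*} (u : List α) : Prop :=
  ∃ x : ℕ → α, CubefreeInf (catInf u x)


theorem fw_fun {α : Type*} (f : ℕ → α) (p q n : ℕ) (hp0 : 0 < p) (hpq : p ≤ q)
    (hlen : p + q - Nat.gcd p q ≤ n)
    (hfp : ∀ i, i + p < n → f i = f (i + p))
    (hfq : ∀ i, i + q < n → f i = f (i + q)) :
    ∀ i, i + Nat.gcd p q < n → f i = f (i + Nat.gcd p q) := by
  by_cases hdvd : p ∣ q
  · have hd : Nat.gcd p q = p := Nat.gcd_eq_left hdvd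
    rw [hd]
    exact hfp
  · set d := Nat.gcd p q with hddef
    have hplt : p < q := lt_of_le_of_ne hpq (fun h => hdvd (h ▸ dvd_refl p))
    have hr0 : 0 < q - p := by omega
    have hgcd : Nat.gcd p (q - p) = d := by
      rw [hddef, Nat.gcd_comm p (q - p), Nat.gcd_sub_self_left hpq, Nat.gcd_comm]
    have hdp' : d ∣ p := Nat.gcd_dvd_left p q
    have hdq' : d ∣ q := Nat.gcd_dvd_right p q
    have hdlep : d ≤ p := Nat.le_of_dvd hp0 hdp'
    have hdp : d < p := by
      rcases lt_or_eq_of_le hdlep with h | h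
      · exact h
      · exact absurd (h ▸ hdq') hdvd
    have hdr : d ≤ q - p := Nat.le_of_dvd hr0 (hgcd ▸ Nat.gcd_dvd_right p (q - p))
    have h2p : 2 * p ≤ n := by omega
    -- prefix periods on length n - p
    have hfp' : ∀ i, i + p < n - p → f i = f (i + p) := fun i h => hfp i (by omega)
    have hfr' : ∀ i, i + (q - p) < n - p → f i = f (i + (q - p)) := by
      intro i h
      have e1 : f i = f (i + q) := hfq i (by omega)
      have e2 : f (i + (q - p)) = f (i + (q - p) + p) := hfp (i + (q - p)) (by omega)
      have e3 : i + (q - p) + p = i + q := by omega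
      rw [e1, e2, e3]
    -- suffix periods
    have hgp : ∀ i, i + p < n - p → f (i + p) = f (i + p + p) := by
      intro i h; exact hfp (i + p) (by omega)
    have hgr : ∀ i, i + (q - p) < n - p → f (i + p) = f (i + (q - p) + p) := by
      intro i h
      have e1 : f i = f (i + p) := hfp i (by omega)
      have e2 : f i = f (i + q) := hfq i (by omega)
      have e3 : i + (q - p) + p = i + q := by omega
      rw [← e1, e2, e3]
    have hlen' : p + (q - p) - Nat.gcd p (q - p) ≤ n - p := by
      rw [hgcd]; omega
    have Hpre : ∀ i, i + d < n - p → f i = f (i + d) := by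
      by_cases hpr : p ≤ q - p
      · have := fw_fun f p (q - p) (n - p) hp0 hpr hlen' hfp' hfr'
        rwa [hgcd] at this
      · have := fw_fun f (q - p) p (n - p) hr0 (by omega)
          (by rw [Nat.gcd_comm, Nat.add_comm]; exact hlen') hfr' hfp'
        rwa [Nat.gcd_comm, hgcd] at this
    have Hsuf : ∀ i, i + d < n - p → f (i + p) = f (i + d + p) := by
      by_cases hpr : p ≤ q - p
      · have := fw_fun (fun i => f (i + p)) p (q - p) (n - p) hp0 hpr hlen' hgp hgr
        rwa [hgcd] at this
      · have := fw_fun (fun i => f (i + p)) (q - p) p (n - p) hr0 (by omega)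
          (by rw [Nat.gcd_comm, Nat.add_comm]; exact hlen') hgr hgp
        rwa [Nat.gcd_comm, hgcd] at this
    -- chain lemma: iterate suffix period
    have chain : ∀ t j, p ≤ j → j + t * d < n → f j = f (j + t * d) := by
      intro t
      induction t with
      | zero => intro j _ _; simp
      | succ t ih =>
        intro j hj hjt
        have hd0 : 0 < d := Nat.gcd_pos_of_pos_left q hp0
        have hce : j + (t + 1) * d = j + t * d + d := by ring
        have h1 : f j = f (j + d) := by
          have := Hsuf (j - p) (by omega)
          have e1 : j - p + p = j := by omega
          have e2 : j - p + d + p = j + d := by omega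
          rwa [e1, e2] at this
        have h2 : f (j + d) = f (j + d + t * d) := ih (j + d) (by omega) (by omega)
        have e3 : j + d + t * d = j + (t + 1) * d := by ring
        rw [h1, h2, e3]
    intro i hi
    by_cases h1 : i + d < n - p
    · exact Hpre i h1
    · have hid : p ≤ i + d := by omega
      by_cases h2 : p ≤ i
      · have := Hsuf (i - p) (by omega)
        have e1 : i - p + p = i := by omega
        have e2 : i - p + d + p = i + d := by omega
        rwa [e1, e2] at this
      · -- i < p
        have e0 : f i = f (i + p) := hfp i (by omega)
        obtain ⟨m, hm⟩ := hdp'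
        have hd0 : 0 < d := Nat.gcd_pos_of_pos_left q hp0
        have hmd : m * d = p := by rw [mul_comm]; exact hm.symm
        have hm1 : 1 ≤ m := by
          rcases Nat.eq_zero_or_pos m with h | h
          · rw [h] at hmd; simp at hmd; omega
          · exact h
        have hstep : (m - 1) * d + d = p := by
          have hsm := Nat.succ_mul (m - 1) d
          rw [Nat.succ_eq_add_one] at hsm
          have e : m - 1 + 1 = m := by omega
          rw [e] at hsm
          omega
        have hc := chain (m - 1) (i + d) hid (by omega)
        have e4 : i + d + (m - 1) * d = i + p := by omega
        rw [e4] at hc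
        rw [e0]
        exact hc.symm
termination_by q

theorem fine_wilf {α : Type*} (w : List α) (p q : ℕ)
    (hp0 : 0 < p) (hp : p < w.length) (hq0 : 0 < q) (hq : q < w.length)
    (hwp : HasPeriod w p) (hwq : HasPeriod w q)
    (hlen : p + q - Nat.gcd p q ≤ w.length) :
    HasPeriod w (Nat.gcd p q) := by
  have hw0 : 0 < w.length := by omega
  set f : ℕ → α := fun i => w.getD i (w.get ⟨0, hw0⟩) with hf
  have hget : ∀ i (h : i < w.length), f i = w.get ⟨i, h⟩ := by
    intro i h
    simp [hf, List.getElem?_eq_getElem h]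
  have Hp : ∀ i, i + p < w.length → f i = f (i + p) := by
    intro i h
    rw [hget i (by omega), hget (i + p) h]
    exact hwp i h
  have Hq : ∀ i, i + q < w.length → f i = f (i + q) := by
    intro i h
    rw [hget i (by omega), hget (i + q) h]
    exact hwq i h
  have main : ∀ i, i + Nat.gcd p q < w.length → f i = f (i + Nat.gcd p q) := by
    rcases le_total p q with h | h
    · exact fw_fun f p q w.length hp0 h hlen Hp Hq
    · have := fw_fun f q p w.length hq0 h
        (by rw [Nat.gcd_comm, Nat.add_comm]; exact hlen) Hq Hp
      rwa [Nat.gcd_comm q p] at this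
  intro i h
  have := main i h
  rwa [hget i (by omega), hget (i + Nat.gcd p q) h] at this
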